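/- Let (B^{p,q})_{p,q∈ℤ} be a bicomplex of real vector spaces (d_h : B^{p,q} → B^{p+1,q}, d_v : B^{p,q} → B^{p,q+1}, d_h² = 0, d_v² = 0, d_h d_v + d_v d_h = 0) satisfying: (i) B^{p,q} = 0 unless 0 ≤ −p ≤ q; (ii) there exists P ≥ 0 with B^{p,q} = 0 whenever p < −P; (iii) for every (p,q) with p + q ≠ 0, ker(d_h : B^{p,q} → B^{p+1,q}) = im(d_h : B^{p−1,q} → B^{p,q}). Set Z_h^r := ker(d_h : B^{−r,r} → B^{−r+1,r}) for r ≥ 0. Suppose β : ⊕_{r≥0} Z_h^r → ⊕_{r≥0} B^{−r,r} is any linear map such that for every r and z ∈ Z_h^r, the components c_p ∈ B^{−p,p} of β(z) satisfy c_r = z, c_p = 0 for p < r, and d_v(c_p) + d_h(c_{p+1}) = 0 for all p ≥ 0. Then β is injective and its image is exactly ker(δ : Tot^0 → Tot^1), where Tot^0 = ⊕_{p≥0} B^{−p,p}, Tot^1 = ⊕_{p≥0} B^{−p,p+1} and the component of δ(c) in B^{−p,p+1} is d_v(c_p) + d_h(c_{p+1}). In particular β induces a linear isomorphism ⊕_{r≥0}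 Z_h^r ≅ H^0 of the total complex. -/

import Mathlib

/- Common setup for bicomplexes `B^{p,q}` of real vector spaces with horizontal
differential `d_h : B^{p,q} → B^{p+1,q}` and vertical differential
`d_v : B^{p,q} → B^{p,q+1}`.  `castB` transports along an equality of the first index. -/

/-- Transport an element of `B p q` along an equality `p = p'` of the first index. -/
def castB (B : ℤ → ℤ → Type*) {q p p' : ℤ} (x : B p q) (h : p = p') : B p' q := h ▸ x

theorem castB_zero (B : ℤ → ℤ → Type*) [∀ p q, AddCommGroup (B p q)]
    {q p p' : ℤ} (h : p = p') : castB B (0 : B p q) h = 0 := by subst h; rfl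

theorem castB_add (B : ℤ → ℤ → Type*) [∀ p q, AddCommGroup (B p q)]
    {q p p' : ℤ} (h : p = p') (x y : B p q) :
    castB B (x + y) h = castB B x h + castB B y h := by subst h; rfl

theorem castB_sub (B : ℤ → ℤ → Type*) [∀ p q, AddCommGroup (B p q)]
    {q p p' : ℤ} (h : p = p') (x y : B p q) :
    castB B (x - y) h = castB B x h - castB B y h := by subst h; rfl

theorem castB_eq_zero (B : ℤ → ℤ → Type*) [∀ p q, AddCommGroup (B p q)]
    {q p p' : ℤ} (h : p = p') (x : B p q) :
    castB B x h = 0 ↔ x = 0 := by subst h; exact Iff.rfl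

def IsC (B : ℤ → ℤ → Type*) [∀ p q, AddCommGroup (B p q)] [∀ p q, Module ℝ (B p q)]
    (dh : ∀ p q, B p q →ₗ[ℝ] B (p + 1) q)
    (dv : ∀ p q, B p q →ₗ[ℝ] B p (q + 1))
    (c : ∀ p : ℕ, B (-(p : ℤ)) (p : ℤ)) : Prop :=
  ∀ p : ℕ, dv (-(p : ℤ)) (p : ℤ) (c p)
      + castB B (dh (-((p : ℤ) + 1)) ((p : ℤ) + 1) (c (p + 1))) (by ring) = 0

theorem IsC_zero (B : ℤ → ℤ → Type*) [∀ p q, AddCommGroup (B p q)] [∀ p q, Module ℝ (B p q)]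
    (dh : ∀ p q, B p q →ₗ[ℝ] B (p + 1) q) (dv : ∀ p q, B p q →ₗ[ℝ] B p (q + 1)) :
    IsC B dh dv 0 := by
  intro p
  simp only [Pi.zero_apply, map_zero, castB_zero, add_zero]

theorem IsC_add (B : ℤ → ℤ → Type*) [∀ p q, AddCommGroup (B p q)] [∀ p q, Module ℝ (B p q)]
    (dh : ∀ p q, B p q →ₗ[ℝ] B (p + 1) q) (dv : ∀ p q, B p q →ₗ[ℝ] B p (q + 1))
    {c c' : ∀ p : ℕ, B (-(p : ℤ)) (p : ℤ)}
    (hc : IsC B dh dv c) (hc' : IsC B dh dv c') : IsC B dh dv (c + c') := by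
  intro p
  simp only [Pi.add_apply, map_add, castB_add]
  rw [add_add_add_comm, hc p, hc' p, add_zero]

theorem IsC_sub (B : ℤ → ℤ → Type*) [∀ p q, AddCommGroup (B p q)] [∀ p q, Module ℝ (B p q)]
    (dh : ∀ p q, B p q →ₗ[ℝ] B (p + 1) q) (dv : ∀ p q, B p q →ₗ[ℝ] B p (q + 1))
    {c c' : ∀ p : ℕ, B (-(p : ℤ)) (p : ℤ)}
    (hc : IsC B dh dv c) (hc' : IsC B dh dv c') : IsC B dh dv (c - c') := by
  intro p
  simp only [Pi.sub_apply, map_sub, castB_sub]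
  rw [sub_add_sub_comm, hc p, hc' p, sub_zero]

theorem IsC_sum (B : ℤ → ℤ → Type*) [∀ p q, AddCommGroup (B p q)] [∀ p q, Module ℝ (B p q)]
    (dh : ∀ p q, B p q →ₗ[ℝ] B (p + 1) q) (dv : ∀ p q, B p q →ₗ[ℝ] B p (q + 1))
    {ι : Type*} (s : Finset ι) (f : ι → ∀ p : ℕ, B (-(p : ℤ)) (p : ℤ))
    (hf : ∀ i ∈ s, IsC B dh dv (f i)) : IsC B dh dv (∑ i ∈ s, f i) :=
  Finset.sum_induction f _ (fun _ _ ha hb => IsC_add B dh dv ha hb) (IsC_zero B dh dv) hf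


/-- for a bicomplex of real vector spaces satisfying (i)-(iii), any linear
map `β : ⊕_{r≥0} Z_h^r → ⊕_{r≥0} B^{-r,r}` such that each `β(z)`, `z ∈ Z_h^r`, is a total
cocycle of the form `z + l.o.t.` is injective with image exactly
`ker(δ : Tot⁰ → Tot¹)`; in particular it induces an isomorphism `⊕ Z_h^r ≅ H⁰` of the
total complex.  (Here, by (i) and (ii), all but finitely many of the spaces `Z_h^r` and
`B^{-p,p}` are zero, so the direct sums coincide with the products below.) -/
theorem statement10 (B : ℤ → ℤ → Type*)
    [∀ p q, AddCommGroup (B p q)] [∀ p q, Module ℝ (B p q)]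
    (dh : ∀ p q, B p q →ₗ[ℝ] B (p + 1) q)
    (dv : ∀ p q, B p q →ₗ[ℝ] B p (q + 1))
    (hdh2 : ∀ p q x, dh (p + 1) q (dh p q x) = 0)
    (hdv2 : ∀ p q x, dv p (q + 1) (dv p q x) = 0)
    (hanti : ∀ p q x, dh p (q + 1) (dv p q x) + dv (p + 1) q (dh p q x) = 0)
    -- (i): concentration in the sector 0 ≤ -p ≤ q
    (hsector : ∀ p q : ℤ, ¬(0 ≤ -p ∧ -p ≤ q) → ∀ x : B p q, x = 0)
    -- (ii): horizontal boundedness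
    (hbound : ∃ P : ℤ, 0 ≤ P ∧ ∀ p q : ℤ, p < -P → ∀ x : B p q, x = 0)
    -- (iii): horizontal exactness off the diagonal p + q = 0
    (hexact : ∀ p q : ℤ, (p + 1) + q ≠ 0 → ∀ x : B (p + 1) q,
      dh (p + 1) q x = 0 → ∃ y : B p q, dh p q y = x)
    (β : (∀ r : ℕ, ↥(LinearMap.ker (dh (-(r : ℤ)) (r : ℤ))))
      →ₗ[ℝ] (∀ p : ℕ, B (-(p : ℤ)) (p : ℤ)))
    (hβ : ∀ (r : ℕ) (z : ↥(LinearMap.ker (dh (-(r : ℤ)) (r : ℤ)))),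
      -- leading component `z` ...
      β (Pi.single r z) r = (z : B (-(r : ℤ)) (r : ℤ))
      -- ... vanishing lower components ...
      ∧ (∀ p : ℕ, p < r → β (Pi.single r z) p = 0)
      -- ... and `β z` is a total cocycle of total degree 0
      ∧ ∀ p : ℕ,
          dv (-(p : ℤ)) (p : ℤ) (β (Pi.single r z) p)
            + castB B (dh (-((p : ℤ) + 1)) ((p : ℤ) + 1) (β (Pi.single r z) (p + 1)))
                (by ring) = 0) :
    Function.Injective β
    ∧ ∀ c : ∀ p : ℕ, B (-(p : ℤ)) (p : ℤ),
        c ∈ Set.range β ↔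
          ∀ p : ℕ,
            dv (-(p : ℤ)) (p : ℤ) (c p)
              + castB B (dh (-((p : ℤ) + 1)) ((p : ℤ) + 1) (c (p + 1))) (by ring) = 0 := by
    classical
  obtain ⟨P, hP0, hPz⟩ := hbound
  set N : ℕ := P.toNat with hNdef
  have hNP : (N : ℤ) = P := Int.toNat_of_nonneg hP0
  have hBzero : ∀ p : ℕ, N < p → ∀ x : B (-(p : ℤ)) (p : ℤ), x = 0 := by
    intro p hp x
    exact hPz _ _ (by omega) x
  have hZzero : ∀ r : ℕ, N < r → ∀ z : ↥(LinearMap.ker (dh (-(r : ℤ)) (r : ℤ))), z = 0 := by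
    intro r hr z
    exact Subtype.ext (hBzero r hr _)
  have hdecomp : ∀ z : (∀ r : ℕ, ↥(LinearMap.ker (dh (-(r : ℤ)) (r : ℤ)))),
      z = ∑ r ∈ Finset.range (N + 1), Pi.single r (z r) := by
    intro z
    funext j
    rw [Finset.sum_apply]
    by_cases hj : j < N + 1
    · rw [Finset.sum_eq_single_of_mem j (Finset.mem_range.mpr hj)]
      · exact (Pi.single_eq_same (M := fun r : ℕ => ↥(LinearMap.ker (dh (-(r : ℤ)) (r : ℤ)))) j (z j)).symm
      · intro b _ hb
        exact Pi.single_eq_of_ne (M := fun r : ℕ => ↥(LinearMap.ker (dh (-(r : ℤ)) (r : ℤ)))) (Ne.symm hb) _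
    · have h1 : ∀ b ∈ Finset.range (N + 1),
          (Pi.single (M := fun r : ℕ => ↥(LinearMap.ker (dh (-(r : ℤ)) (r : ℤ)))) b (z b)) j
            = 0 := by
        intro b hb
        have hbj : j ≠ b := by have := Finset.mem_range.mp hb; omega
        exact Pi.single_eq_of_ne (M := fun r : ℕ => ↥(LinearMap.ker (dh (-(r : ℤ)) (r : ℤ)))) hbj _
      rw [Finset.sum_eq_zero h1]
      exact hZzero j (by omega) (z j)
  have hIsCβ : ∀ z, IsC B dh dv (β z) := by
    intro z
    rw [hdecomp z, map_sum]
    exact IsC_sum B dh dv _ _ (fun r _ => (hβ r (z r)).2.2)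
  have hinj : Function.Injective β := by
    refine (injective_iff_map_eq_zero β).mpr ?_
    intro z hz0
    funext r
    induction r using Nat.strong_induction_on with
    | _ r ih =>
      by_cases hr : N < r
      · exact hZzero r hr _
      · have h1 : β z r = 0 := congrFun hz0 r
        rw [hdecomp z, map_sum, Finset.sum_apply,
          Finset.sum_eq_single_of_mem r (Finset.mem_range.mpr (by omega))] at h1
        · exact Subtype.ext (by rw [← (hβ r (z r)).1]; exact h1)
        · intro b _ hbr
          rcases lt_or_gt_of_ne hbr with h | h
          · rw [ih b h]
            simp
          · exact (hβ b (z b)).2.1 r h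
  have step : ∀ k : ℕ,
      (∀ c, IsC B dh dv c → (∀ p, p < k + 1 → c p = 0) → c ∈ Set.range β) →
      ∀ c, IsC B dh dv c → (∀ p, p < k → c p = 0) → c ∈ Set.range β := by
    intro k ih c hc hv
    have hker : c k ∈ LinearMap.ker (dh (-(k : ℤ)) (k : ℤ)) := by
      rw [LinearMap.mem_ker]
      cases k with
      | zero => exact hsector _ _ (by omega) _
      | succ j =>
        have h0 := hc j
        rw [hv j (Nat.lt_succ_self j), map_zero, zero_add] at h0
        exact (castB_eq_zero B _ _).mp h0
    set z : ↥(LinearMap.ker (dh (-(k : ℤ)) (k : ℤ))) := ⟨c k, hker⟩ with hzdef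
    have hvan : ∀ p, p < k + 1 → (c - β (Pi.single k z)) p = 0 := by
      intro p hp
      simp only [Pi.sub_apply]
      rcases Nat.lt_or_ge p k with h | h
      · rw [hv p h, (hβ k z).2.1 p h, sub_zero]
      · have hpk : p = k := by omega
        subst hpk
        rw [(hβ p z).1]
        exact sub_self _
    obtain ⟨w, hw⟩ := ih (c - β (Pi.single k z))
      (IsC_sub B dh dv hc (hβ k z).2.2) hvan
    exact ⟨w + Pi.single k z, by rw [map_add, hw]; abel⟩
  have main : ∀ j : ℕ, ∀ c, IsC B dh dv c →
      (∀ p, p < N + 1 - j → c p = 0) → c ∈ Set.range β := by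
    intro j
    induction j with
    | zero =>
      intro c hc hv
      have hc0 : c = 0 := by
        funext p
        by_cases hp : p < N + 1
        · exact hv p (by omega)
        · exact hBzero p (by omega) _
      exact ⟨0, by rw [map_zero, hc0]⟩
    | succ j ih =>
      intro c hc hv
      exact step (N - j) (fun c hc hv => ih c hc (fun p hp => hv p (by omega))) c hc
        (fun p hp => hv p (by omega))
  refine ⟨hinj, fun c => ⟨?_, ?_⟩⟩
  · rintro ⟨z, rfl⟩
    exact hIsCβ z
  · intro hc
    exact main (N + 1) c hc (fun p hp => absurd hp (by omega))
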